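/- arXiv:1210.7054 — 3 statements merged into one kernel-verified Lean document; each statement's English description precedes it below -/
import Mathlib

section
/- The ℓ1-penalized semidefinite value φ = max{Tr ΣZ − λ‖Z‖₁ : Z ⪰ 0, Tr Z = 1} is an upper bound on the cardinality-penalized PCA value ψ = max{xᵀΣx − λ‖x‖₀ : ‖x‖₂ = 1}. -/
open Finset Matrix in
theorem dspca_upper_bounds_card_penalized (n : ℕ) (Sig : Matrix (Fin n) (Fin n) ℝ)
    (hSig : Sig.PosSemidef) (lam : ℝ) (hlam : 0 ≤ lam) (φ ψ : ℝ)
    (hφ : IsGreatest {v : ℝ | ∃ Z : Matrix (Fin n) (Fin n) ℝ, Z.PosSemidef ∧ Z.trace = 1 ∧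
            v = (Sig * Z).trace - lam * ∑ i, ∑ j, |Z i j|} φ)
    (hψ : IsGreatest {v : ℝ | ∃ x : Fin n → ℝ, (∑ i, (x i) ^ 2 = 1) ∧
            v = x ⬝ᵥ Sig.mulVec x - lam * ((Finset.univ.filter (fun i => x i ≠ 0)).card : ℝ)} ψ) :
    ψ ≤ φ := by
  obtain ⟨x, hx1, hψv⟩ := hψ.1
  set Z : Matrix (Fin n) (Fin n) ℝ := fun i j => x i * x j with hZ
  have hpsd : Z.PosSemidef := by
    rw [Matrix.posSemidef_iff_dotProduct_mulVec]
    constructor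
    · ext i j
      rw [Matrix.conjTranspose_apply]
      simp [hZ, mul_comm]
    · intro y
      have : (star y) ⬝ᵥ Z.mulVec y = (∑ i, x i * y i) ^ 2 := by
        simp only [dotProduct, Matrix.mulVec, hZ, RCLike.star_def]
        simp only [starRingEnd_apply, star_trivial, dotProduct]
        rw [sq, Finset.sum_mul_sum]
        apply Finset.sum_congr rfl; intro i _
        rw [Finset.mul_sum]
        apply Finset.sum_congr rfl; intro j _
        ring
      rw [this]
      positivity
  have htr : Z.trace = 1 := by
    simpa [Matrix.trace, Matrix.diag, hZ, sq] using hx1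
  have htr2 : (Sig * Z).trace = x ⬝ᵥ Sig.mulVec x := by
    simp only [Matrix.trace, Matrix.diag, Matrix.mul_apply, dotProduct, Matrix.mulVec]
    simp only [hZ]
    rw [Finset.sum_comm]
    apply Finset.sum_congr rfl; intro i _
    rw [Finset.mul_sum]
    apply Finset.sum_congr rfl; intro j _
    have hsym : Sig j i = Sig i j := by
      have := congrFun (congrFun hSig.1 i) j
      simpa [Matrix.conjTranspose_apply] using this
    rw [hsym]; ring
  have habs : (∑ i, ∑ j, |Z i j|) = (∑ i, |x i|) ^ 2 := by
    simp only [hZ, abs_mul]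
    rw [sq, Finset.sum_mul_sum]
  have hcs : (∑ i, |x i|) ^ 2 ≤
      ((Finset.univ.filter (fun i => x i ≠ 0)).card : ℝ) := by
    set s := Finset.univ.filter (fun i : Fin n => x i ≠ 0) with hs
    have h1 : (∑ i, |x i|) = ∑ i ∈ s, |x i| := by
      rw [Finset.sum_filter]
      apply Finset.sum_congr rfl
      intro i _
      by_cases h : x i = 0 <;> simp [h]
    have h2 : (∑ i ∈ s, |x i|) ^ 2 ≤ (s.card : ℝ) * ∑ i ∈ s, |x i| ^ 2 :=
      sq_sum_le_card_mul_sum_sq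
    have h3 : (∑ i ∈ s, |x i| ^ 2) ≤ 1 := by
      rw [← hx1]
      simp only [sq_abs]
      exact Finset.sum_le_sum_of_subset_of_nonneg (Finset.subset_univ s)
        (fun i _ _ => sq_nonneg _)
    calc (∑ i, |x i|) ^ 2 = (∑ i ∈ s, |x i|) ^ 2 := by rw [h1]
      _ ≤ (s.card : ℝ) * ∑ i ∈ s, |x i| ^ 2 := h2
      _ ≤ (s.card : ℝ) * 1 := by
          apply mul_le_mul_of_nonneg_left h3 (Nat.cast_nonneg _)
      _ = (s.card : ℝ) := mul_one _
  have hmem : (Sig * Z).trace - lam * ∑ i, ∑ j, |Z i j| ∈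
      {v : ℝ | ∃ Z : Matrix (Fin n) (Fin n) ℝ, Z.PosSemidef ∧ Z.trace = 1 ∧
        v = (Sig * Z).trace - lam * ∑ i, ∑ j, |Z i j|} := ⟨Z, hpsd, htr, rfl⟩
  have hle := hφ.2 hmem
  have : ψ ≤ (Sig * Z).trace - lam * ∑ i, ∑ j, |Z i j| := by
    rw [hψv, htr2, habs]
    have := mul_le_mul_of_nonneg_left hcs hlam
    linarith
  linarith
end

section
/- Safe feature elimination: with Σ = AᵀA, if the i-th diagonal entry satisfies Σ_{ii} = aᵢᵀaᵢ < λ, then (aᵢᵀξ)² < λ for every unit vector ξ, and hence feature i contributes zero to the objective Σⱼ((aⱼᵀξ)² − λ)₊ for every unit ξ. -/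
theorem safe_feature_elimination (m n : ℕ) (A : Matrix (Fin m) (Fin n) ℝ)
    (lam : ℝ) (hlam : 0 < lam) (i : Fin n)
    (hvar : ∑ j, (A j i) ^ 2 < lam) :
    ∀ ξ : Fin m → ℝ, (∑ j, (ξ j) ^ 2 = 1) →
      (∑ j, A j i * ξ j) ^ 2 < lam ∧ max ((∑ j, A j i * ξ j) ^ 2 - lam) 0 = 0 := by
  intro ξ hξ
  have key : (∑ j, A j i * ξ j) ^ 2 < lam := by
    have h := Finset.sum_mul_sq_le_sq_mul_sq Finset.univ (fun j => A j i) ξ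
    calc (∑ j, A j i * ξ j) ^ 2 ≤ (∑ j, (A j i) ^ 2) * (∑ j, (ξ j) ^ 2) := h
      _ = ∑ j, (A j i) ^ 2 := by rw [hξ, mul_one]
      _ < lam := hvar
  exact ⟨key, max_eq_right (by linarith)⟩
end

section
/- Strong duality for the row subproblem inner part: for Y ⪰ 0 symmetric, s ∈ ℝ^{n−1}, λ ≥ 0, α > 0, max over y ∈ Range(Y) of (2yᵀs − 2λ‖y‖₁ − α yᵀY†y) = min over u with ‖u − s‖_∞ ≤ λ of (1/α) uᵀYu. -/
open Finset Matrix

private lemma aux_small_step (a b : ℝ) (hb : 0 ≤ b)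
    (h : ∀ t : ℝ, 0 < t → t ≤ 1 → 0 ≤ 2 * a + t * b) : 0 ≤ a := by
  by_contra ha
  push_neg at ha
  rcases eq_or_lt_of_le hb with hb0 | hb0
  · have := h 1 one_pos le_rfl; nlinarith
  · have ht : 0 < min 1 ((-a) / b) := lt_min one_pos (div_pos (by linarith) hb0)
    have h2 : min 1 ((-a) / b) * b ≤ -a := by
      calc min 1 ((-a) / b) * b ≤ ((-a) / b) * b :=
            mul_le_mul_of_nonneg_right (min_le_right _ _) hb
        _ = -a := by field_simp
    have := h _ ht (min_le_left _ _)
    linarith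

open Finset Matrix in
theorem row_subproblem_strong_duality (k : ℕ) (Y Yd : Matrix (Fin k) (Fin k) ℝ)
    (hY : Y.PosSemidef)
    (hP1 : Y * Yd * Y = Y) (hP2 : Yd * Y * Yd = Yd)
    (hP3 : (Y * Yd)ᵀ = Y * Yd) (hP4 : (Yd * Y)ᵀ = Yd * Y)
    (s : Fin k → ℝ) (lam α : ℝ) (hlam : 0 ≤ lam) (hα : 0 < α) (p d : ℝ)
    (hp : IsGreatest {v : ℝ | ∃ y : Fin k → ℝ, (∃ w, y = Y.mulVec w) ∧
            v = 2 * (y ⬝ᵥ s) - 2 * lam * (∑ i, |y i|) - α * (y ⬝ᵥ Yd.mulVec y)} p)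
    (hd : IsLeast {v : ℝ | ∃ u : Fin k → ℝ, (∀ i, |u i - s i| ≤ lam) ∧
            v = (1 / α) * (u ⬝ᵥ Y.mulVec u)} d) :
    p = d := by
  have hYs : Yᵀ = Y := by
    have := hY.1
    simpa [Matrix.IsHermitian, Matrix.conjTranspose_eq_transpose_of_trivial] using this
  have psd : ∀ x : Fin k → ℝ, 0 ≤ x ⬝ᵥ Y *ᵥ x := fun x => by simpa using hY.dotProduct_mulVec_nonneg x
  have hmove : ∀ a b : Fin k → ℝ, (Y *ᵥ a) ⬝ᵥ b = a ⬝ᵥ (Y *ᵥ b) := by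
    intro a b
    rw [dotProduct_comm, dotProduct_mulVec, ← mulVec_transpose, hYs, dotProduct_comm]
  have sym : ∀ a b : Fin k → ℝ, a ⬝ᵥ Y *ᵥ b = b ⬝ᵥ Y *ᵥ a := by
    intro a b
    rw [← hmove, dotProduct_comm]
  -- quadratic form identity through the pseudoinverse
  have hquad : ∀ w : Fin k → ℝ, (Y *ᵥ w) ⬝ᵥ Yd *ᵥ (Y *ᵥ w) = w ⬝ᵥ Y *ᵥ w := by
    intro w
    rw [mulVec_mulVec, hmove, mulVec_mulVec, ← Matrix.mul_assoc, hP1]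
  -- ℓ1 bound
  have hl1 : ∀ (y u : Fin k → ℝ), (∀ i, |u i - s i| ≤ lam) →
      y ⬝ᵥ s - y ⬝ᵥ u ≤ lam * ∑ i, |y i| := by
    intro y u hu
    have hrw : y ⬝ᵥ s - y ⬝ᵥ u = ∑ i, y i * (s i - u i) := by
      simp [dotProduct, mul_sub, Finset.sum_sub_distrib]
    rw [hrw, Finset.mul_sum]
    refine Finset.sum_le_sum fun i _ => ?_
    calc y i * (s i - u i) ≤ |y i * (s i - u i)| := le_abs_self _
      _ = |y i| * |s i - u i| := abs_mul _ _
      _ ≤ |y i| * lam := by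
          refine mul_le_mul_of_nonneg_left ?_ (abs_nonneg _)
          rw [abs_sub_comm]; exact hu i
      _ = lam * |y i| := mul_comm _ _
  -- weak duality
  have weak : ∀ (w u : Fin k → ℝ), (∀ i, |u i - s i| ≤ lam) →
      2 * ((Y *ᵥ w) ⬝ᵥ s) - 2 * lam * (∑ i, |(Y *ᵥ w) i|) - α * ((Y *ᵥ w) ⬝ᵥ Yd *ᵥ (Y *ᵥ w))
        ≤ (1 / α) * (u ⬝ᵥ Y *ᵥ u) := by
    intro w u hu
    have h1 := hl1 (Y *ᵥ w) u hu
    have h2 : 0 ≤ ((1 / α) • u - w) ⬝ᵥ Y *ᵥ ((1 / α) • u - w) := psd _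
    have hexp : ((1 / α) • u - w) ⬝ᵥ Y *ᵥ ((1 / α) • u - w) =
        (1 / α) * (1 / α) * (u ⬝ᵥ Y *ᵥ u) - 2 * (1 / α) * (u ⬝ᵥ Y *ᵥ w) + w ⬝ᵥ Y *ᵥ w := by
      simp only [Matrix.mulVec_sub, Matrix.mulVec_smul, dotProduct_sub, sub_dotProduct,
        dotProduct_smul, smul_dotProduct, smul_eq_mul, sym w u]
      ring
    rw [hexp] at h2
    have h3 : (Y *ᵥ w) ⬝ᵥ u = u ⬝ᵥ Y *ᵥ w := by
      rw [hmove]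
      exact sym w u
    have hne : α ≠ 0 := ne_of_gt hα
    have h2' : 0 ≤ u ⬝ᵥ Y *ᵥ u - 2 * α * (u ⬝ᵥ Y *ᵥ w) + α * α * (w ⬝ᵥ Y *ᵥ w) := by
      calc (0:ℝ) ≤ α * α * ((1 / α) * (1 / α) * (u ⬝ᵥ Y *ᵥ u) - 2 * (1 / α) * (u ⬝ᵥ Y *ᵥ w)
              + w ⬝ᵥ Y *ᵥ w) := mul_nonneg (mul_nonneg hα.le hα.le) h2
        _ = u ⬝ᵥ Y *ᵥ u - 2 * α * (u ⬝ᵥ Y *ᵥ w) + α * α * (w ⬝ᵥ Y *ᵥ w) := by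
            field_simp
    have hfin : 2 * (u ⬝ᵥ Y *ᵥ w) - α * (w ⬝ᵥ Y *ᵥ w) ≤ (1 / α) * (u ⬝ᵥ Y *ᵥ u) := by
      rw [one_div_mul_eq_div, le_div_iff₀ hα]
      nlinarith [h2']
    rw [hquad w]
    linarith [h1, hfin, h3.symm.trans_le (le_refl _), h3 ▸ h1]
  obtain ⟨⟨u, hu, hdv⟩, hdlb⟩ := hd
  obtain ⟨⟨yp, ⟨wp, hyp⟩, hpv⟩, hpub⟩ := hp
  -- p ≤ d
  have hpd : p ≤ d := by
    rw [hpv, hyp, hdv]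
    exact weak wp u hu
  -- strong part: variational inequality at dual optimum
  have vi : ∀ u' : Fin k → ℝ, (∀ i, |u' i - s i| ≤ lam) →
      0 ≤ u ⬝ᵥ Y *ᵥ (u' - u) := by
    intro u' hu'
    refine aux_small_step _ ((u' - u) ⬝ᵥ Y *ᵥ (u' - u)) (psd _) ?_
    intro t ht0 ht1
    have hfeas : ∀ i, |(u + t • (u' - u)) i - s i| ≤ lam := by
      intro i
      have hrw : (u + t • (u' - u)) i - s i = (1 - t) * (u i - s i) + t * (u' i - s i) := by
        simp [Pi.add_apply, Pi.smul_apply, smul_eq_mul]; ring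
      rw [hrw]
      calc |(1 - t) * (u i - s i) + t * (u' i - s i)|
          ≤ |(1 - t) * (u i - s i)| + |t * (u' i - s i)| := abs_add_le _ _
        _ = (1 - t) * |u i - s i| + t * |u' i - s i| := by
            rw [abs_mul, abs_mul, abs_of_nonneg (by linarith), abs_of_nonneg ht0.le]
        _ ≤ (1 - t) * lam + t * lam :=
            add_le_add (mul_le_mul_of_nonneg_left (hu i) (by linarith))
              (mul_le_mul_of_nonneg_left (hu' i) ht0.le)
        _ = lam := by ring
    have hmem : (1 / α) * ((u + t • (u' - u)) ⬝ᵥ Y *ᵥ (u + t • (u' - u))) ∈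
        {v : ℝ | ∃ u'' : Fin k → ℝ, (∀ i, |u'' i - s i| ≤ lam) ∧
          v = (1 / α) * (u'' ⬝ᵥ Y.mulVec u'')} := ⟨_, hfeas, rfl⟩
    have hle := hdlb hmem
    rw [hdv] at hle
    have hexp : (u + t • (u' - u)) ⬝ᵥ Y *ᵥ (u + t • (u' - u)) =
        u ⬝ᵥ Y *ᵥ u + 2 * t * (u ⬝ᵥ Y *ᵥ (u' - u)) + t * t * ((u' - u) ⬝ᵥ Y *ᵥ (u' - u)) := by
      simp only [Matrix.mulVec_add, Matrix.mulVec_smul, dotProduct_add, add_dotProduct,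
        dotProduct_smul, smul_dotProduct, smul_eq_mul, sym (u' - u) u]
      ring
    rw [hexp] at hle
    have hα1 : (0:ℝ) < 1 / α := by positivity
    have hAA := le_of_mul_le_mul_left hle hα1
    have h5 : 0 ≤ t * (2 * (u ⬝ᵥ Y *ᵥ (u' - u)) + t * ((u' - u) ⬝ᵥ Y *ᵥ (u' - u))) := by
      nlinarith [hAA]
    exact nonneg_of_mul_nonneg_right h5 ht0
  -- the primal candidate
  set y : Fin k → ℝ := (1 / α) • (Y *ᵥ u) with hy
  have hyw : y = Y *ᵥ ((1 / α) • u) := by rw [hy, Matrix.mulVec_smul]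
  -- complementary-slackness vector
  classical
  set u' : Fin k → ℝ := fun i => if 0 < y i then s i - lam else if y i < 0 then s i + lam else s i
    with hu'def
  have hu'feas : ∀ i, |u' i - s i| ≤ lam := by
    intro i
    by_cases h1 : 0 < y i
    · simp [hu'def, h1, abs_of_nonneg hlam]
    · by_cases h2 : y i < 0
      · simp [hu'def, h1, h2, abs_of_nonneg hlam]
      · simp [hu'def, h1, h2, hlam]
  have hdot : y ⬝ᵥ u' = y ⬝ᵥ s - lam * ∑ i, |y i| := by
    simp only [dotProduct, Finset.mul_sum, ← Finset.sum_sub_distrib]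
    refine Finset.sum_congr rfl fun i _ => ?_
    by_cases h1 : 0 < y i
    · simp only [hu'def, h1, if_true]
      rw [abs_of_pos h1]; ring
    · by_cases h2 : y i < 0
      · simp only [hu'def, h1, if_false, h2, if_true]
        rw [abs_of_neg h2]; ring
      · have h0 : y i = 0 := le_antisymm (not_lt.1 h1) (not_lt.1 h2)
        simp [hu'def, h1, h2, h0]
  -- equality of the linearized terms
  have hvi := vi u' hu'feas
  have hYu : u ⬝ᵥ Y *ᵥ (u' - u) = α * (y ⬝ᵥ u' - y ⬝ᵥ u) := by
    rw [← hmove]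
    have : (Y *ᵥ u) ⬝ᵥ (u' - u) = α * (((1 / α) • (Y *ᵥ u)) ⬝ᵥ (u' - u)) := by
      rw [smul_dotProduct, smul_eq_mul]
      field_simp
    rw [this, hy, dotProduct_sub]
  rw [hYu] at hvi
  have hle1 : y ⬝ᵥ u ≤ y ⬝ᵥ s - lam * ∑ i, |y i| := by
    rw [← hdot]; nlinarith [hvi]
  have hle2 : y ⬝ᵥ s - lam * ∑ i, |y i| ≤ y ⬝ᵥ u := by
    have := hl1 y u hu
    linarith
  have heq : y ⬝ᵥ s - lam * ∑ i, |y i| = y ⬝ᵥ u := le_antisymm hle2 hle1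
  -- value of y
  have hyu : y ⬝ᵥ u = d := by
    rw [hy, smul_dotProduct, smul_eq_mul, hmove u u]
    exact hdv.symm
  have hyq : α * (y ⬝ᵥ Yd *ᵥ y) = d := by
    rw [hyw, hquad ((1 / α) • u)]
    rw [Matrix.mulVec_smul, dotProduct_smul, smul_dotProduct, smul_eq_mul, hdv]
    field_simp
    rw [smul_eq_mul]; field_simp
  have hdmem : d ∈ {v : ℝ | ∃ y : Fin k → ℝ, (∃ w, y = Y.mulVec w) ∧
      v = 2 * (y ⬝ᵥ s) - 2 * lam * (∑ i, |y i|) - α * (y ⬝ᵥ Yd.mulVec y)} := by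
    refine ⟨y, ⟨(1 / α) • u, hyw⟩, ?_⟩
    have : 2 * (y ⬝ᵥ s) - 2 * lam * (∑ i, |y i|) = 2 * (y ⬝ᵥ u) := by linarith [heq]
    rw [this, hyu]
    linarith [hyq]
  have hdp : d ≤ p := hpub hdmem
  linarith
end
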